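/- arXiv:1410.3089 — 7 statements merged into one kernel-verified Lean document; each statement's English description precedes it below -/
import Mathlib

section
/- Let A be a finite local commutative ring and let F be a free submodule of A^n. Then F is a direct summand of A^n: there exists a submodule Q of A^n with F ⊕ Q = A^n such that Q is a free A-module, and moreover the quotient module A^n/F is a free A-module. -/
open IsLocalRing TensorProduct

/-- Let `A` be a finite local commutative ring and let `F` be a free
submodule of `A^n`. Then `F` is a direct summand of `A^n`: there is a submodule `Q`
with `F ⊕ Q = A^n` which is free, and moreover the quotient `A^n / F` is free. -/
theorem free_submodule_isComplemented_and_quotient_free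
    {A : Type*} [CommRing A] [Fintype A] [IsLocalRing A] {n : ℕ}
    (F : Submodule A (Fin n → A)) (hF : Module.Free A F) :
    (∃ Q : Submodule A (Fin n → A), IsCompl F Q ∧ Module.Free A Q) ∧
      Module.Free A ((Fin n → A) ⧸ F) := by
  classical
  haveI := hF
  -- An element `t ≠ 0` killing the maximal ideal.
  obtain ⟨t, ht0, htm⟩ : ∃ t : A, t ≠ 0 ∧ ∀ s ∈ maximalIdeal A, t * s = 0 := by
    have hnil : IsNilpotent (maximalIdeal A) := by
      have := IsArtinianRing.isNilpotent_jacobson_bot (R := A)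
      rwa [IsLocalRing.jacobson_eq_maximalIdeal ⊥ bot_ne_top] at this
    obtain ⟨N, hN⟩ := hnil
    have hex : ∃ m, maximalIdeal A ^ m = ⊥ := ⟨N, hN⟩
    have hKspec : maximalIdeal A ^ Nat.find hex = ⊥ := Nat.find_spec hex
    have hKpos : Nat.find hex ≠ 0 := by
      intro h
      rw [h, pow_zero, Ideal.one_eq_top] at hKspec
      have : (1 : A) = 0 := (Submodule.eq_bot_iff _).mp hKspec 1 trivial
      exact one_ne_zero this
    have hprev : maximalIdeal A ^ (Nat.find hex - 1) ≠ ⊥ :=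
      Nat.find_min hex (by omega)
    obtain ⟨t, htmem, ht0⟩ := Submodule.exists_mem_ne_zero_of_ne_bot hprev
    refine ⟨t, ht0, fun s hs => ?_⟩
    have : t * s ∈ maximalIdeal A ^ Nat.find hex := by
      have : Nat.find hex = (Nat.find hex - 1) + 1 := by omega
      rw [this, pow_succ]
      exact Ideal.mul_mem_mul htmem hs
    rw [hKspec] at this
    exact this
  -- Injectivity of `k ⊗ F → k ⊗ A^n`.
  set k := ResidueField A with hk
  let b := hF.chooseBasis
  have hinj : Function.Injective (F.subtype.lTensor k) := by
    rw [← LinearMap.baseChange_eq_ltensor]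
    rw [← LinearMap.ker_eq_bot (M := k ⊗[A] F)]
    rw [Submodule.eq_bot_iff]
    intro x hx
    rw [LinearMap.mem_ker] at hx
    set bk := b.baseChange k with hbk
    set c : Module.Free.ChooseBasisIndex A F → k := fun i => bk.repr x i with hc
    -- lift the coordinates
    choose a ha using fun i => IsLocalRing.residue_surjective (R := A) (c i)
    -- compute the image in coordinates
    have hxrepr : ∑ i, c i • bk i = x := bk.sum_repr x
    have himg : ∑ i, (c i) ⊗ₜ[A] ((b i : Fin n → A)) = 0 := by
      calc ∑ i, (c i) ⊗ₜ[A] ((b i : Fin n → A))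
          = F.subtype.baseChange k (∑ i, c i • bk i) := by
            rw [map_sum]
            refine Finset.sum_congr rfl fun i _ => ?_
            rw [map_smul, hbk, Module.Basis.baseChange_apply, LinearMap.baseChange_tmul]
            simp [TensorProduct.smul_tmul']
        _ = 0 := by rw [hxrepr, hx]
    have hcoord : ∀ j : Fin n, ∑ i, a i * (b i : Fin n → A) j ∈ maximalIdeal A := by
      intro j
      have := congrArg
        (fun z => (((Pi.basisFun A (Fin n)).baseChange k).repr z) j) himg
      simp only [map_sum, map_zero, Finsupp.coe_zero, Pi.zero_apply,
        Module.Basis.baseChange_repr_tmul, Pi.basisFun_repr, Finsupp.coe_finset_sum,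
        Finset.sum_apply] at this
      have h2 : IsLocalRing.residue A (∑ i, a i * (b i : Fin n → A) j) = 0 := by
        rw [map_sum, ← this]
        refine Finset.sum_congr rfl fun i _ => ?_
        rw [map_mul, ha, Algebra.smul_def, IsLocalRing.ResidueField.algebraMap_eq]
        exact mul_comm _ _
      exact Ideal.Quotient.eq_zero_iff_mem.mp h2
    -- the element of F with these coordinates
    set y : F := ∑ i, a i • b i with hy
    have hty : t • y = 0 := by
      have hyval : (y : Fin n → A) = ∑ i, a i • (b i : Fin n → A) := by
        rw [hy]; push_cast; rfl
      have : ((t • y : F) : Fin n → A) = 0 := by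
        rw [Submodule.coe_smul, hyval]
        funext j
        simp only [Pi.smul_apply, Finset.smul_sum, Finset.sum_apply, smul_eq_mul,
          Pi.zero_apply]
        exact htm _ (hcoord j)
      exact Subtype.ext this
    have hta : ∀ i, t * a i = 0 := by
      have h1 : t • y = ∑ i, (t * a i) • b i := by
        rw [hy, Finset.smul_sum]
        refine Finset.sum_congr rfl fun i _ => ?_
        rw [smul_smul]
      rw [hty] at h1
      have h2 := b.repr_sum_self (fun i => t * a i)
      rw [← h1] at h2
      simp only [map_zero, Finsupp.coe_zero] at h2
      intro i
      have := congrFun h2 i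
      simpa using this.symm
    have hczero : ∀ i, c i = 0 := by
      intro i
      by_cases hmem : a i ∈ maximalIdeal A
      · rw [← ha i]
        exact Ideal.Quotient.eq_zero_iff_mem.mpr hmem
      · exfalso
        have hunit : IsUnit (a i) := by
          by_contra h
          exact hmem ((IsLocalRing.mem_maximalIdeal _).mpr h)
        obtain ⟨u, hu⟩ := hunit
        apply ht0
        have : t * (a i * ↑u⁻¹) = 0 := by rw [← mul_assoc, hta i, zero_mul]
        rwa [← hu, Units.mul_inv, mul_one] at this
    rw [← hxrepr]
    simp [hczero]
  -- Assemble the conclusions.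
  have hfree_quot : Module.Free A ((Fin n → A) ⧸ F) :=
    Module.free_of_lTensor_residueField_injective F.subtype F.mkQ
      (Submodule.mkQ_surjective F) (LinearMap.exact_subtype_mkQ F) hinj
  obtain ⟨l', hl'⟩ :=
    (IsLocalRing.split_injective_iff_lTensor_residueField_injective F.subtype).mpr hinj
  have hproj : ∀ x : F, l' x = x := fun x => by
    have := LinearMap.ext_iff.mp hl' x
    simpa using this
  have hcompl : IsCompl F (LinearMap.ker l') := LinearMap.isCompl_of_proj hproj
  refine ⟨⟨LinearMap.ker l', hcompl, ?_⟩, hfree_quot⟩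
  exact Module.Free.of_equiv (F.quotientEquivOfIsCompl _ hcompl)
end

section
/- Let A be a finite local commutative ring, let N be a free submodule of A^n, and let x ∈ A^n. Then x ∈ N if and only if f(x) = 0 for every f ∈ N°. Equivalently, N°° = N. -/
open IsLocalRing

/-- A finite local ring has a nonzero socle element. -/
lemma exists_socle_elem {A : Type*} [CommRing A] [Fintype A] [IsLocalRing A] :
    ∃ a : A, a ≠ 0 ∧ ∀ b ∈ maximalIdeal A, a * b = 0 := by
  have hnil : IsNilpotent (maximalIdeal A) := by
    have := IsArtinianRing.isNilpotent_jacobson_bot (R := A)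
    rwa [IsLocalRing.jacobson_eq_maximalIdeal ⊥ bot_ne_top] at this
  have hex : ∃ k, maximalIdeal A ^ k = ⊥ := by
    obtain ⟨k, hk⟩ := hnil; exact ⟨k, by simpa using hk⟩
  classical
  set k₀ := Nat.find hex with hk₀
  have hk₀spec : maximalIdeal A ^ k₀ = ⊥ := Nat.find_spec hex
  have hk₀pos : k₀ ≠ 0 := by
    intro h
    have h1 : (1 : A) ∈ (⊥ : Ideal A) := by
      rw [← hk₀spec, h, pow_zero, Ideal.one_eq_top]; trivial
    simp at h1
  have hprev : maximalIdeal A ^ (k₀ - 1) ≠ ⊥ :=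
    Nat.find_min hex (by omega)
  obtain ⟨a, ha, ha0⟩ := Submodule.exists_mem_ne_zero_of_ne_bot hprev
  refine ⟨a, ha0, fun b hb => ?_⟩
  have : a * b ∈ maximalIdeal A ^ k₀ := by
    have : a * b ∈ maximalIdeal A ^ (k₀ - 1) * maximalIdeal A := Ideal.mul_mem_mul ha hb
    rwa [← pow_succ, Nat.sub_add_cancel (by omega)] at this
  rw [hk₀spec] at this
  simpa using this

/-- Over a finite local ring, an injective linear map between finite free modules
has a left inverse. -/
lemma exists_leftInverse_of_injective_local {A : Type*} [CommRing A] [Fintype A]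
    [IsLocalRing A] {ι κ : Type*} [Fintype ι] [DecidableEq ι] [Fintype κ] [DecidableEq κ]
    (φ : (ι → A) →ₗ[A] (κ → A)) (hφ : Function.Injective φ) :
    ∃ ψ : (κ → A) →ₗ[A] (ι → A), ψ ∘ₗ φ = LinearMap.id := by
  obtain ⟨a, ha0, ha⟩ := exists_socle_elem (A := A)
  set q := residue A with hq
  set M : Matrix κ ι A := LinearMap.toMatrix' φ with hM
  set Mb : Matrix κ ι (ResidueField A) := M.map q with hMb
  have hker : LinearMap.ker (Matrix.toLin' Mb) = ⊥ := by
    rw [LinearMap.ker_eq_bot']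
    intro vb hvb
    by_contra hne
    obtain ⟨i, hi⟩ := Function.ne_iff.mp hne
    rw [Pi.zero_apply] at hi
    choose v hv using fun i => IsLocalRing.residue_surjective (R := A) (vb i)
    have hmv : ∀ j, q ((M.mulVec v) j) = (Mb.mulVec vb) j := by
      intro j
      simp [Matrix.mulVec, dotProduct, map_sum, hq, hv, hMb]
    have hmv0 : ∀ j, (M.mulVec v) j ∈ maximalIdeal A := by
      intro j
      have h0 : (Mb.mulVec vb) j = 0 := by
        have := congrFun (show Matrix.toLin' Mb vb = 0 from hvb) j
        simpa [Matrix.toLin'_apply] using this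
      have := (hmv j).trans h0
      exact Ideal.Quotient.eq_zero_iff_mem.mp this
    have hMav : M.mulVec (a • v) = 0 := by
      rw [Matrix.mulVec_smul]
      funext j
      exact ha _ (hmv0 j)
    have hφav : φ (a • v) = 0 := by
      have : Matrix.toLin' M (a • v) = 0 := by
        rw [Matrix.toLin'_apply]; exact hMav
      rwa [hM, Matrix.toLin'_toMatrix'] at this
    have hav : a • v = 0 := hφ (by simpa using hφav)
    have havi : a * v i = 0 := congrFun hav i
    have hunit : IsUnit (v i) := by
      by_contra h
      refine hi ?_
      rw [← hv i]
      exact Ideal.Quotient.eq_zero_iff_mem.mpr ((IsLocalRing.mem_maximalIdeal _).mpr h)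
    exact ha0 (by
      obtain ⟨u, hu⟩ := hunit
      calc a = a * v i * (↑u⁻¹ : A) := by rw [← hu, mul_assoc, Units.mul_inv, mul_one]
        _ = 0 := by rw [havi, zero_mul])
  obtain ⟨g, hg⟩ := (Matrix.toLin' Mb).exists_leftInverse_of_injective hker
  set Lb : Matrix ι κ (ResidueField A) := LinearMap.toMatrix' g with hLb
  have hLbMb : Lb * Mb = 1 := by
    apply Matrix.toLin'.injective
    rw [Matrix.toLin'_mul, hLb, Matrix.toLin'_toMatrix', hg, Matrix.toLin'_one]
  choose L hL using fun (i : ι) (j : κ) => IsLocalRing.residue_surjective (R := A) (Lb i j)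
  set Lm : Matrix ι κ A := Matrix.of L with hLm
  have hmap : (Lm * M).map q = 1 := by
    rw [Matrix.map_mul]
    have h1 : Lm.map q = Lb := by ext i j; exact hL i j
    rw [h1, ← hMb, hLbMb]
  have hdet : IsUnit (Lm * M).det := by
    have h1 : q ((Lm * M).det) = 1 := by
      rw [RingHom.map_det, RingHom.mapMatrix_apply, hmap, Matrix.det_one]
    by_contra h
    have : q ((Lm * M).det) = 0 := Ideal.Quotient.eq_zero_iff_mem.mpr
      ((IsLocalRing.mem_maximalIdeal _).mpr h)
    rw [h1] at this
    exact one_ne_zero this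
  refine ⟨Matrix.toLin' ((Lm * M)⁻¹ * Lm), ?_⟩
  have hmul : ((Lm * M)⁻¹ * Lm) * M = 1 := by
    rw [Matrix.mul_assoc, Matrix.nonsing_inv_mul _ hdet]
  have h2 : Matrix.toLin' ((Lm * M)⁻¹ * Lm) ∘ₗ Matrix.toLin' M = LinearMap.id := by
    rw [← Matrix.toLin'_mul, hmul, Matrix.toLin'_one]
  have h3 : Matrix.toLin' M = φ := by rw [hM, Matrix.toLin'_toMatrix']
  rwa [h3] at h2

/-- Let `A` be a finite local commutative ring, `N` a free submodule of
`A^n`, and `x ∈ A^n`. Then `x ∈ N` iff `f x = 0` for every `f` in the orthogonal `N°`;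
equivalently, the bi-orthogonal `N°°` equals `N`. -/
theorem mem_iff_forall_dualAnnihilator_eq_zero_of_isLocalRing
    {A : Type*} [CommRing A] [Fintype A] [IsLocalRing A] {n : ℕ}
    (N : Submodule A (Fin n → A)) (hN : Module.Free A N) :
    (∀ x : Fin n → A, x ∈ N ↔ ∀ f ∈ N.dualAnnihilator, f x = 0) ∧
      N.dualAnnihilator.dualCoannihilator = N := by
  classical
  obtain ⟨⟨ι, b⟩⟩ := hN.exists_basis
  have hfin : Finite ι := Finite.of_injective _ b.injective
  cases nonempty_fintype ι
  let φ : (ι → A) →ₗ[A] (Fin n → A) := N.subtype ∘ₗ (b.equivFun.symm : (ι → A) ≃ₗ[A] N).toLinearMap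
  have hφinj : Function.Injective φ := N.injective_subtype.comp b.equivFun.symm.injective
  have hφrange : LinearMap.range φ = N := by
    rw [LinearMap.range_comp, LinearEquiv.range, Submodule.map_top, Submodule.range_subtype]
  obtain ⟨ψ, hψ⟩ := exists_leftInverse_of_injective_local φ hφinj
  set π : (Fin n → A) →ₗ[A] (Fin n → A) := φ ∘ₗ ψ with hπ
  have hπmem : ∀ x, π x ∈ N := fun x => hφrange ▸ LinearMap.mem_range_self φ (ψ x)
  have hπfix : ∀ y ∈ N, π y = y := by
    intro y hy
    rw [← hφrange] at hy
    obtain ⟨z, rfl⟩ := hy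
    have h := LinearMap.congr_fun hψ z
    simp only [LinearMap.comp_apply, LinearMap.id_apply] at h
    rw [hπ, LinearMap.comp_apply, h]
  have key : ∀ x : Fin n → A, (∀ f ∈ N.dualAnnihilator, f x = 0) → x ∈ N := by
    intro x hx
    have hx' : x = π x := by
      funext j
      have hfmem : (LinearMap.proj j - (LinearMap.proj j).comp π : (Fin n → A) →ₗ[A] A)
          ∈ N.dualAnnihilator := by
        rw [Submodule.mem_dualAnnihilator]
        intro w hw
        simp [hπfix w hw]
      have := hx _ hfmem
      simpa [sub_eq_zero] using this
    rw [hx']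
    exact hπmem x
  refine ⟨fun x => ⟨fun hx f hf => (Submodule.mem_dualAnnihilator f).mp hf x hx, key x⟩, ?_⟩
  ext x
  rw [Submodule.mem_dualCoannihilator]
  exact ⟨key x, fun hx f hf => (Submodule.mem_dualAnnihilator f).mp hf x hx⟩
end

section
/- Let A be a finite commutative ring and let N be a free submodule of A^n. Then N°° = N. -/
-- socle lemma
lemma exists_socle {A : Type*} [CommRing A] [Fintype A] (m : Ideal A) (hm : m.IsMaximal) :
    ∃ z : A, z ≠ 0 ∧ ∀ a : A, a * z = 0 ↔ a ∈ m := by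
  classical
  have hfin : Finite (Ideal A) :=
    Finite.of_injective (fun I : Ideal A => (I : Set A)) SetLike.coe_injective
  obtain ⟨i, j, hij, hpow⟩ : ∃ i j : ℕ, i < j ∧ m ^ i = m ^ j := by
    obtain ⟨i, j, hne, h⟩ := Finite.exists_ne_map_eq_of_infinite (fun k : ℕ => m ^ k)
    rcases hne.lt_or_gt with h' | h'
    · exact ⟨i, j, h', h⟩
    · exact ⟨j, i, h', h.symm⟩
  have hqq : m ^ i ≤ m • (m ^ i) := by
    calc m ^ i = m ^ j := hpow
    _ ≤ m ^ (i + 1) := Ideal.pow_le_pow_right hij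
    _ = m * m ^ i := by rw [pow_succ']
    _ = m • (m ^ i) := rfl
  have hfg : (m ^ i).FG := IsNoetherian.noetherian _
  obtain ⟨r, hr1, hr0⟩ :=
    Submodule.exists_sub_one_mem_and_smul_eq_zero_of_fg_of_le_smul m (m ^ i) hfg hqq
  have hrm : r ∉ m := by
    intro h
    exact hm.ne_top (Ideal.eq_top_iff_one m |>.mpr (by simpa using m.sub_mem h hr1))
  have hr0' : r ∈ (m ^ i).annihilator := Submodule.mem_annihilator.mpr hr0
  set J : Ideal A := (m ^ i).annihilator with hJ
  have hrne : r ≠ 0 := fun h => hrm (h ▸ m.zero_mem)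
  have hPi : m ^ i * J = ⊥ := by
    rw [eq_bot_iff]
    refine Ideal.mul_le.mpr fun a ha b hb => ?_
    have := Submodule.mem_annihilator.mp hb a ha
    simpa [mul_comm] using this
  have hP0 : ¬ (m ^ 0 * J = ⊥) := by
    rw [pow_zero, Ideal.one_eq_top, Ideal.top_mul]
    intro h
    exact hrne (by simpa [h] using hr0')
  have hex : ∃ s, m ^ s * J = ⊥ := ⟨i, hPi⟩
  set s₀ := Nat.find hex with hs₀
  have hs₀0 : s₀ ≠ 0 := fun h => hP0 (h ▸ Nat.find_spec hex)
  obtain ⟨s, hs⟩ := Nat.exists_eq_succ_of_ne_zero hs₀0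
  have hsne : m ^ s * J ≠ ⊥ := Nat.find_min hex (by omega)
  obtain ⟨z, hzmem, hz0⟩ := Submodule.exists_mem_ne_zero_of_ne_bot hsne
  have hfwd : ∀ a ∈ m, a * z = 0 := by
    intro a ha
    have : a * z ∈ m * (m ^ s * J) := Ideal.mul_mem_mul ha hzmem
    rw [← mul_assoc, ← pow_succ'] at this
    have hbot : m ^ (s + 1) * J = ⊥ := by
      have := Nat.find_spec hex
      rwa [← hs₀, hs] at this
    simpa [hbot] using this
  refine ⟨z, hz0, fun a => ⟨?_, fun ha => hfwd a ha⟩⟩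
  intro haz
  by_contra ham
  obtain ⟨c, i₀, hi₀, hc⟩ := hm.exists_inv ham
  apply hz0
  calc z = (c * a + i₀) * z := by rw [hc, one_mul]
  _ = c * (a * z) + i₀ * z := by ring
  _ = 0 := by rw [haz, hfwd i₀ hi₀, mul_zero, add_zero]



lemma key_surj {A : Type*} [CommRing A] [Fintype A] {n : ℕ} {ι : Type*} [Fintype ι]
    (v : ι → (Fin n → A)) (hv : LinearIndependent A v) (c : ι → A) :
    ∃ f : Module.Dual A (Fin n → A), ∀ i, f (v i) = c i := by
  classical
  set Φ : Module.Dual A (Fin n → A) →ₗ[A] (ι → A) :=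
    LinearMap.pi (fun i => LinearMap.applyₗ (v i)) with hΦ
  suffices htop : LinearMap.range Φ = ⊤ by
    obtain ⟨f, hf⟩ := (LinearMap.range_eq_top.mp htop) c
    exact ⟨f, fun i => congrFun hf i⟩
  by_contra hne
  have hwf : IsCoatomic (Submodule A (ι → A)) := by
    haveI : IsNoetherian A (ι → A) := isNoetherian_of_finite A (ι → A)
    exact isCoatomic_of_orderTop_gt_wellFounded wellFounded_gt
  rcases hwf.eq_top_or_exists_le_coatom (LinearMap.range Φ) with h | ⟨W, hW, hle⟩
  · exact hne h
  haveI hsimple : IsSimpleModule A ((ι → A) ⧸ W) := isSimpleModule_iff_isCoatom.mpr hW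
  obtain ⟨I, hI, ⟨e⟩⟩ := isSimpleModule_iff_quot_maximal.mp hsimple
  obtain ⟨z, hz0, hz⟩ := exists_socle I hI
  set μ : (ι → A) →ₗ[A] A ⧸ I := e.toLinearMap ∘ₗ W.mkQ with hμ
  have hμ0 : ∀ f : Module.Dual A (Fin n → A), μ (Φ f) = 0 := by
    intro f
    have : Φ f ∈ W := hle ⟨f, rfl⟩
    simp [hμ, Submodule.Quotient.mk_eq_zero, this, (Submodule.Quotient.mk_eq_zero W).mpr this]
  -- lift the coefficients
  have hmk := Ideal.Quotient.mk_surjective (I := I)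
  choose a ha using fun i => hmk (μ (Pi.single i 1))
  have hsingle : ∀ (i : ι) (b : A),
      (Pi.single i b : ι → A) = b • (Pi.single i (1 : A) : ι → A) := by
    intro i b
    funext j
    by_cases h : j = i <;> simp [Pi.single_apply, h]
  have hmu : ∀ u : ι → A, μ u = Ideal.Quotient.mk I (∑ i, u i * a i) := by
    intro u
    have step1 : μ u = ∑ i, u i • μ (Pi.single i 1) := by
      conv_lhs => rw [← Finset.univ_sum_single u]
      rw [map_sum]
      exact Finset.sum_congr rfl fun i _ => by rw [hsingle i (u i), map_smul]
    rw [step1, map_sum]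
    refine Finset.sum_congr rfl fun i _ => ?_
    rw [← ha i, Algebra.smul_def, Ideal.Quotient.algebraMap_eq, ← map_mul]
  -- key conditions
  have hcond : ∀ j : Fin n, (∑ i, v i j * a i) ∈ I := by
    intro j
    have := hμ0 (LinearMap.proj j)
    rw [show Φ (LinearMap.proj j) = fun i => v i j from rfl] at this
    rw [hmu] at this
    exact (Ideal.Quotient.eq_zero_iff_mem).mp this
  have hex : ∃ i₀, a i₀ ∉ I := by
    by_contra h
    push_neg at h
    have hμz : ∀ u, μ u = 0 := by
      intro u
      rw [hmu, Ideal.Quotient.eq_zero_iff_mem]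
      exact I.sum_mem fun i _ => I.mul_mem_left (u i) (h i)
    have hsurj : Function.Surjective μ := e.surjective.comp W.mkQ_surjective
    haveI : Nontrivial (A ⧸ I) := Ideal.Quotient.nontrivial_iff.mpr hI.ne_top
    obtain ⟨y, hy⟩ := exists_ne (0 : A ⧸ I)
    obtain ⟨u, hu⟩ := hsurj y
    exact hy ((hμz u).symm.trans hu).symm
  obtain ⟨i₀, hi₀⟩ := hex
  have hdep : ∑ i, (a i * z) • v i = 0 := by
    funext j
    have : (∑ i, (a i * z) • v i) j = z * ∑ i, v i j * a i := by
      rw [Finset.sum_apply, Finset.mul_sum]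
      refine Finset.sum_congr rfl fun i _ => ?_
      simp [smul_eq_mul]; ring
    rw [this]
    have := (hz _).mpr (hcond j)
    simpa [mul_comm] using this
  have := Fintype.linearIndependent_iff.mp hv (fun i => a i * z) (by simpa using hdep) i₀
  exact hi₀ ((hz (a i₀)).mp this)



/-- Let `A` be a finite commutative ring and `N` a free submodule of
`A^n`. Then the bi-orthogonal `N°°` equals `N`. -/
theorem dualCoannihilator_dualAnnihilator_of_free
    {A : Type*} [CommRing A] [Fintype A] {n : ℕ}
    (N : Submodule A (Fin n → A)) (hN : Module.Free A N) :
    N.dualAnnihilator.dualCoannihilator = N := by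
  classical
  rcases subsingleton_or_nontrivial A with hA | hA
  · haveI : Subsingleton (Fin n → A) := ⟨fun x y => funext fun j => Subsingleton.elim _ _⟩
    ext x
    simp [Subsingleton.elim x 0]
  haveI := hN
  haveI : Module.Finite A N := Module.Finite.of_finite
  set ι := Module.Free.ChooseBasisIndex A N with hι
  haveI : Fintype ι := Module.Free.ChooseBasisIndex.fintype A N
  set b : Module.Basis ι A N := Module.Free.chooseBasis A N with hb
  set v : ι → (Fin n → A) := fun i => (b i : Fin n → A) with hvdef
  have hv : LinearIndependent A v :=
    b.linearIndependent.map' N.subtype N.ker_subtype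
  have hspan : Submodule.span A (Set.range v) = N := by
    have h1 := congrArg (Submodule.map N.subtype) b.span_eq
    rwa [Submodule.map_span, Submodule.map_subtype_top, ← Set.range_comp] at h1
  -- dual family
  choose F hF using fun i => key_surj v hv (Pi.single i 1)
  -- retraction
  set p : (Fin n → A) →ₗ[A] (Fin n → A) :=
    ∑ i, LinearMap.smulRight (F i) (v i) with hp
  have hpapp : ∀ x, p x = ∑ i, F i x • v i := by
    intro x
    simp [hp, LinearMap.sum_apply, LinearMap.smulRight_apply]
  have hpmem : ∀ x, p x ∈ N := by
    intro x
    rw [hpapp]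
    exact N.sum_mem fun i _ => N.smul_mem _ (by rw [hvdef]; exact (b i).2)
  have hpfix : ∀ x ∈ N, p x = x := by
    intro x hx
    rw [← hspan] at hx
    induction hx using Submodule.span_induction with
    | mem y hy =>
      obtain ⟨j, rfl⟩ := hy
      rw [hpapp]
      have h1 : ∀ i : ι, F i (v j) • v i = if j = i then v i else 0 := by
        intro i
        rw [hF i j]
        by_cases h : j = i <;> simp [Pi.single_apply, h]
      rw [Finset.sum_congr rfl fun i _ => h1 i, Finset.sum_ite_eq]
      simp
    | zero => simp
    | add y z _ _ hy hz => rw [map_add, hy, hz]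
    | smul c y _ hy => rw [map_smul, hy]
  refine le_antisymm ?_ ?_
  · intro x hx
    rw [Submodule.mem_dualCoannihilator] at hx
    have hxp : x = p x := by
      funext j
      have hmem : (LinearMap.proj j - (LinearMap.proj j).comp p :
          Module.Dual A (Fin n → A)) ∈ N.dualAnnihilator := by
        rw [Submodule.mem_dualAnnihilator]
        intro w hw
        simp [hpfix w hw]
      have := hx _ hmem
      simpa [sub_eq_zero] using this
    rw [hxp]
    exact hpmem x
  · intro x hx
    rw [Submodule.mem_dualCoannihilator]
    intro f hf
    exact (Submodule.mem_dualAnnihilator f).mp hf x hx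
end

section
/- Let A be a finite local commutative ring and let C be a free submodule of A^n of rank k (an (n,k)-linear code over A). Then the dual code C^⊥ is a free A-module of rank n − k. -/
open IsLocalRing Matrix

/-- In a finite local ring there is a nonzero element annihilating the maximal ideal
(or, if the ring is a field, any nonzero element works). -/
lemma exists_ann {A : Type*} [CommRing A] [Fintype A] [IsLocalRing A] :
    ∃ a : A, a ≠ 0 ∧ ∀ x ∈ maximalIdeal A, a * x = 0 := by
  have hnil : IsNilpotent (maximalIdeal A) := by
    have := IsArtinianRing.isNilpotent_jacobson_bot (R := A)
    rwa [IsLocalRing.jacobson_eq_maximalIdeal (⊥ : Ideal A) bot_ne_top] at this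
  obtain ⟨t, ht⟩ := hnil
  have hex : ∃ s, maximalIdeal A ^ s = ⊥ := ⟨t, by simpa using ht⟩
  classical
  set t0 := Nat.find hex with ht0
  have ht0spec : maximalIdeal A ^ t0 = ⊥ := Nat.find_spec hex
  have ht0pos : 0 < t0 := by
    rcases Nat.eq_zero_or_pos t0 with h | h
    · exfalso
      rw [h, pow_zero, Ideal.one_eq_top] at ht0spec
      exact one_ne_zero ((Submodule.eq_bot_iff _).mp ht0spec 1 Submodule.mem_top)
    · exact h
  have hlt : maximalIdeal A ^ (t0 - 1) ≠ ⊥ := Nat.find_min hex (by omega)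
  obtain ⟨a, ha, ha0⟩ := Submodule.exists_mem_ne_zero_of_ne_bot hlt
  refine ⟨a, ha0, fun x hx => ?_⟩
  have : a * x ∈ maximalIdeal A ^ t0 := by
    have := Ideal.mul_mem_mul ha hx
    rwa [← pow_succ, Nat.sub_add_cancel ht0pos] at this
  rw [ht0spec] at this
  simpa using this

lemma exists_right_inverse {A : Type*} [CommRing A] [Fintype A] [IsLocalRing A] {n k : ℕ}
    (C : Submodule A (Fin n → A)) (bC : Module.Basis (Fin k) A C)
    (G : Matrix (Fin k) (Fin n) A) (hG : ∀ i j, G i j = (bC i : Fin n → A) j) :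
    ∃ H : Matrix (Fin n) (Fin k) A, G * H = 1 := by
  classical
  obtain ⟨a, ha0, ha⟩ := exists_ann (A := A)
  set κ := ResidueField A
  set Gbar : Matrix (Fin k) (Fin n) κ := G.map (residue A) with hGbar
  have hinj : LinearMap.ker (Matrix.toLin' Gbar.transpose) = ⊥ := by
    rw [LinearMap.ker_eq_bot']
    intro c hc
    choose c' hc' using fun i => residue_surjective (R := A) (c i)
    have hw : ∀ j, (∑ i, c' i * G i j) ∈ maximalIdeal A := by
      intro j
      rw [← residue_eq_zero_iff]
      have := congrFun hc j
      simp only [Matrix.toLin'_apply, Matrix.mulVec, dotProduct,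
        Matrix.transpose_apply, Pi.zero_apply] at this
      rw [map_sum]
      simpa [hGbar, Matrix.map_apply, hc', mul_comm] using this
    have hz : (∑ i, (a * c' i) • bC i) = 0 := by
      have : ((∑ i, (a * c' i) • bC i : C) : Fin n → A) = 0 := by
        funext j
        simp only [Submodule.coe_sum, Finset.sum_apply, SetLike.val_smul, Pi.smul_apply,
          smul_eq_mul, Pi.zero_apply]
        calc ∑ i, a * c' i * (bC i : Fin n → A) j
            = a * ∑ i, c' i * G i j := by
              rw [Finset.mul_sum]; congr 1; funext i; rw [hG, mul_assoc]
          _ = 0 := ha _ (hw j)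
      exact Subtype.ext this
    have hall : ∀ i, a * c' i = 0 :=
      Fintype.linearIndependent_iff.mp bC.linearIndependent (fun i => a * c' i) hz
    funext i
    show c i = 0
    by_contra hci
    have hcu : IsUnit (c' i) := by
      rw [← IsLocalRing.notMem_maximalIdeal]
      intro hmem
      exact hci (by rw [← hc' i, residue_eq_zero_iff]; exact hmem)
    exact ha0 (by have := hall i; rwa [IsUnit.mul_left_eq_zero hcu] at this)
  -- left inverse over the residue field
  obtain ⟨g, hg⟩ := (Matrix.toLin' Gbar.transpose).exists_leftInverse_of_injective hinj
  set M : Matrix (Fin k) (Fin n) κ := LinearMap.toMatrix' g with hM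
  have hMG : M * Gbar.transpose = 1 := by
    have := congrArg LinearMap.toMatrix' hg
    rwa [LinearMap.toMatrix'_comp, LinearMap.toMatrix'_toLin', LinearMap.toMatrix'_id] at this
  have hGM : Gbar * M.transpose = 1 := by
    have := congrArg Matrix.transpose hMG
    rwa [Matrix.transpose_mul, Matrix.transpose_transpose, Matrix.transpose_one] at this
  -- lift `Mᵀ` to `A`
  set H0 : Matrix (Fin n) (Fin k) A :=
    Matrix.of fun j i => Function.surjInv residue_surjective (M.transpose j i) with hH0
  have hH0bar : H0.map (residue A) = M.transpose := by
    funext j i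
    simp [hH0, Matrix.map_apply, Function.surjInv_eq]
  have hres1 : (G * H0).map (residue A) = 1 := by
    rw [Matrix.map_mul, hH0bar, ← hGbar, hGM]
  have hdet : IsUnit (G * H0).det := by
    rw [← IsLocalRing.notMem_maximalIdeal]
    intro hmem
    have : residue A (G * H0).det = 0 := (residue_eq_zero_iff _).mpr hmem
    rw [RingHom.map_det, RingHom.mapMatrix_apply, hres1, Matrix.det_one] at this
    exact one_ne_zero this
  refine ⟨H0 * (G * H0)⁻¹, ?_⟩
  rw [← Matrix.mul_assoc]
  exact Matrix.mul_nonsing_inv _ hdet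

/-- The dual code `C^⊥ = {y : ⟨x,y⟩ = 0 for all x ∈ C}` of a linear code `C ⊆ A^ι`
with respect to the standard bilinear form `⟨x,y⟩ = ∑ i, x i * y i`. -/
def dualCode {A : Type*} [CommRing A] {ι : Type*} [Fintype ι]
    (C : Submodule A (ι → A)) : Submodule A (ι → A) where
  carrier := {y | ∀ x ∈ C, ∑ i, x i * y i = 0}
  add_mem' := by
    intro a b ha hb x hx
    simp only [Set.mem_setOf_eq] at ha hb ⊢
    simp [Pi.add_apply, mul_add, Finset.sum_add_distrib, ha x hx, hb x hx]
  zero_mem' := by intro x hx; simp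
  smul_mem' := by
    intro c y hy x hx
    simp only [Set.mem_setOf_eq] at hy ⊢
    simp only [Pi.smul_apply, smul_eq_mul, mul_left_comm, ← Finset.mul_sum, hy x hx,
      mul_zero]

lemma mem_dualCode {A : Type*} [CommRing A] {ι : Type*} [Fintype ι]
    (C : Submodule A (ι → A)) (y : ι → A) :
    y ∈ dualCode C ↔ ∀ x ∈ C, ∑ i, x i * y i = 0 := Iff.rfl

/-- Over a finite local commutative ring `A`, the dual code of an
`(n,k)`-code `C` (a free submodule of `A^n` of rank `k`) is free of rank `n - k`. -/
theorem dualCode_free_of_rank_sub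
    {A : Type*} [CommRing A] [Fintype A] [IsLocalRing A] {n k : ℕ}
    (C : Submodule A (Fin n → A)) (bC : Module.Basis (Fin k) A C) :
    Nonempty (Module.Basis (Fin (n - k)) A (dualCode C)) := by
  classical
  set G : Matrix (Fin k) (Fin n) A := Matrix.of fun i j => (bC i : Fin n → A) j with hGdef
  have hG : ∀ i j, G i j = (bC i : Fin n → A) j := fun i j => rfl
  obtain ⟨H, hGH⟩ := exists_right_inverse C bC G hG
  set π : (Fin n → A) →ₗ[A] (Fin k → A) := Matrix.toLin' G with hπ
  set σ : (Fin k → A) →ₗ[A] (Fin n → A) := Matrix.toLin' H with hσ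
  have hπσ : π.comp σ = LinearMap.id := by
    rw [hπ, hσ, ← Matrix.toLin'_mul, hGH, Matrix.toLin'_one]
  have hps : ∀ v, π (σ v) = v := fun v => by
    have := LinearMap.ext_iff.mp hπσ v
    simpa using this
  have hπapp : ∀ y i, π y i = ∑ j, G i j * y j := by
    intro y i
    simp [hπ, Matrix.toLin'_apply, Matrix.mulVec, dotProduct]
  -- the dual code is the kernel of π
  have hdual : dualCode C = LinearMap.ker π := by
    ext y
    rw [mem_dualCode, LinearMap.mem_ker]
    constructor
    · intro hy
      funext i
      have := hy (bC i) (bC i).2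
      rw [Pi.zero_apply, hπapp]
      simpa [hG] using this
    · intro hy x hx
      set r : Fin k → A := fun i => bC.repr ⟨x, hx⟩ i with hr
      have hx' : ∀ j, x j = ∑ i, r i * G i j := by
        intro j
        have := congrArg (fun z : C => (z : Fin n → A) j) (bC.sum_repr ⟨x, hx⟩)
        simp only [Submodule.coe_sum, Finset.sum_apply, SetLike.val_smul, Pi.smul_apply,
          smul_eq_mul] at this
        rw [← this]
        simp [hG, hr]
      have hzero : ∀ i, ∑ j, G i j * y j = 0 := by
        intro i
        rw [← hπapp, hy, Pi.zero_apply]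
      calc ∑ j, x j * y j = ∑ j, (∑ i, r i * G i j) * y j := by simp only [hx']
        _ = ∑ i, r i * ∑ j, G i j * y j := by
            simp_rw [Finset.sum_mul, Finset.mul_sum, mul_assoc]
            exact Finset.sum_comm
        _ = 0 := by simp [hzero]
  set K := LinearMap.ker π with hK
  have hmemK : ∀ x, x - σ (π x) ∈ K := by
    intro x
    rw [hK, LinearMap.mem_ker, map_sub, hps, sub_self]
  set F : (Fin n → A) →ₗ[A] K :=
    (LinearMap.id - σ.comp π).codRestrict K (fun x => by simpa using hmemK x) with hF
  have hFapp : ∀ x, (F x : Fin n → A) = x - σ (π x) := fun x => rfl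
  have hFsplit : F.comp K.subtype = LinearMap.id := by
    apply LinearMap.ext
    rintro ⟨z, hz⟩
    apply Subtype.ext
    rw [hK, LinearMap.mem_ker] at hz
    simp [hFapp, hz]
  haveI : Module.Projective A K := Module.Projective.of_split K.subtype F hFsplit
  have hFsurj : Function.Surjective F := by
    intro z
    exact ⟨(z : Fin n → A), by
      apply Subtype.ext
      have hz : π (z : Fin n → A) = 0 := LinearMap.mem_ker.mp z.2
      simp [hFapp, hz]⟩
  haveI : Module.Finite A K := Module.Finite.of_surjective F hFsurj
  haveI : Module.FinitePresentation A K := Module.finitePresentation_of_projective _ _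
  haveI : Module.Free A K := Module.free_of_flat_of_isLocalRing
  -- the splitting equivalence
  set Finv : (K × (Fin k → A)) →ₗ[A] (Fin n → A) :=
    K.subtype.comp (LinearMap.fst A K (Fin k → A)) + σ.comp (LinearMap.snd A K (Fin k → A))
    with hFinv
  have h1 : (F.prod π).comp Finv = LinearMap.id := by
    apply LinearMap.ext
    rintro ⟨⟨z, hz⟩, v⟩
    rw [hK, LinearMap.mem_ker] at hz
    apply Prod.ext
    · apply Subtype.ext
      simp [hFinv, hFapp, map_add, hz, hps]
    · simp [hFinv, map_add, hz, hps]
  have h2 : Finv.comp (F.prod π) = LinearMap.id := by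
    apply LinearMap.ext
    intro x
    simp [hFinv, hFapp]
  set e : (Fin n → A) ≃ₗ[A] (K × (Fin k → A)) := LinearEquiv.ofLinear (F.prod π) Finv h1 h2
    with he
  have hfr : Module.finrank A K + k = n := by
    have h3 := LinearEquiv.finrank_eq e
    rw [Module.finrank_prod, Module.finrank_fin_fun, Module.finrank_fin_fun] at h3
    omega
  have hfr' : Module.finrank A K = n - k := by omega
  exact ⟨(Module.finBasisOfFinrankEq A K hfr').map (LinearEquiv.ofEq _ _ hdual.symm)⟩
end

section
/- Let A be a finite commutative ring, let C be a free submodule of A^n, and let x ∈ A^n. Then x ∈ C if and only if S(x) = 0, i.e., if and only if ⟨x,y⟩ = 0 for every y ∈ C^⊥. -/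
-- Lemma 1: annihilator element of a maximal ideal in a finite comm ring
lemma exists_ann_of_isMaximal {A : Type*} [CommRing A] [Fintype A]
    (m : Ideal A) (hm : m.IsMaximal) :
    ∃ a : A, a ≠ 0 ∧ ∀ b ∈ m, a * b = 0 := by
  classical
  haveI : Finite (Ideal A) := Finite.of_injective (fun I : Ideal A => (I : Set A)) SetLike.coe_injective
  -- find t with m^t = m^(t+1)
  obtain ⟨i, j, hij, hpow⟩ : ∃ i j : ℕ, i < j ∧ m ^ i = m ^ j := by
    obtain ⟨i, j, hne, h⟩ := Finite.exists_ne_map_eq_of_infinite (fun k : ℕ => m ^ k)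
    rcases Nat.lt_or_gt_of_ne hne with h' | h'
    · exact ⟨i, j, h', h⟩
    · exact ⟨j, i, h', h.symm⟩
  have hstab : m ^ i = m ^ (i + 1) := by
    refine le_antisymm ?_ ?_
    · calc m ^ i = m ^ j := hpow
        _ ≤ m ^ (i+1) := Ideal.pow_le_pow_right hij
    · exact Ideal.pow_le_pow_right (Nat.le_succ i)
  -- Nakayama
  obtain ⟨r, hr1, hr0⟩ :=
    Submodule.exists_sub_one_mem_and_smul_eq_zero_of_fg_of_le_smul m (m ^ i)
      (IsNoetherian.noetherian _)
      (by rw [Ideal.smul_eq_mul, ← pow_succ']; exact le_of_eq hstab)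
  -- smul on ring elements is mul
  have hPt : ∀ b ∈ m ^ i, r * b = 0 := fun b hb => by
    simpa [smul_eq_mul] using hr0 b hb
  have hP : ∃ s : ℕ, ∀ b ∈ m ^ s, r * b = 0 := ⟨i, hPt⟩
  set s := Nat.find hP with hsdef
  have hPs : ∀ b ∈ m ^ s, r * b = 0 := Nat.find_spec hP
  have hs0 : s ≠ 0 := by
    intro h
    have h1 : (1 : A) ∈ m ^ s := by rw [h, pow_zero, Ideal.one_eq_top]; exact Submodule.mem_top
    have : r = 0 := by simpa using hPs 1 h1
    apply hm.ne_top
    rw [Ideal.eq_top_iff_one]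
    have : (-1 : A) ∈ m := by simpa [this] using hr1
    simpa using m.neg_mem this
  have hmin : ¬ ∀ b ∈ m ^ (s - 1), r * b = 0 := Nat.find_min hP (by omega)
  push_neg at hmin
  obtain ⟨b, hb, hrb⟩ := hmin
  refine ⟨r * b, hrb, fun c hc => ?_⟩
  have hbc : b * c ∈ m ^ s := by
    have : m ^ s = m ^ (s - 1) * m := by
      conv_lhs => rw [show s = (s - 1) + 1 by omega]
      rw [pow_succ]
    rw [this]
    exact Ideal.mul_mem_mul hb hc
  calc r * b * c = r * (b * c) := by ring
    _ = 0 := hPs _ hbc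

open Finset Matrix in
lemma step_A {A : Type*} [CommRing A] [Fintype A]
    {ι κ : Type*} [Fintype ι] [Fintype κ] [DecidableEq κ] [DecidableEq ι]
    (M : Matrix κ ι A) (hv : LinearIndependent A (fun j => M j))
    (m : Ideal A) (hm : m.IsMaximal) :
    Function.Surjective (M.map (Ideal.Quotient.mk m)).mulVecLin := by
  classical
  haveI := hm
  letI : Field (A ⧸ m) := Ideal.Quotient.field m
  set π := Ideal.Quotient.mk m
  obtain ⟨a, ha0, ha⟩ := exists_ann_of_isMaximal m hm
  have hann : ∀ c : A, a * c = 0 → c ∈ m := by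
    intro c hc
    have hle : m ≤ Ideal.torsionOf A A a := fun b hb => by
      rw [Ideal.mem_torsionOf_iff]; simpa [smul_eq_mul, mul_comm] using ha b hb
    have hne : Ideal.torsionOf A A a ≠ ⊤ := by
      intro h
      apply ha0
      have h1 : (1 : A) ∈ Ideal.torsionOf A A a := h ▸ Submodule.mem_top
      simpa [Ideal.mem_torsionOf_iff] using h1
    have := hm.eq_of_le hne hle
    rw [this, Ideal.mem_torsionOf_iff, smul_eq_mul, mul_comm]
    exact hc
  -- rows of the reduced matrix are linearly independent over the residue field
  have hind : LinearIndependent (A ⧸ m) (fun j => (M.map π) j) := by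
    rw [Fintype.linearIndependent_iff]
    intro c hc j
    choose d hd using fun j => Ideal.Quotient.mk_surjective (c j)
    have hmem : ∀ i, (∑ j, d j * M j i) ∈ m := by
      intro i
      rw [← Ideal.Quotient.eq_zero_iff_mem]
      have := congrFun hc i
      simpa [Matrix.map_apply, hd, Finset.sum_apply] using this
    have hzero : ∑ j, (a * d j) • (M j) = 0 := by
      funext i
      simp only [Finset.sum_apply, Pi.smul_apply, smul_eq_mul, Pi.zero_apply]
      calc ∑ j, a * d j * M j i = a * ∑ j, d j * M j i := by
            rw [Finset.mul_sum]
            exact Finset.sum_congr rfl fun _ _ => mul_assoc _ _ _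
        _ = 0 := ha _ (hmem i)
    have := (Fintype.linearIndependent_iff.mp hv) (fun j => a * d j) hzero j
    have hdj : d j ∈ m := hann (d j) this
    rw [← hd j]
    exact Ideal.Quotient.eq_zero_iff_mem.mpr hdj
  -- transpose injective
  have hinj : Function.Injective ((M.map π)ᵀ).mulVecLin := by
    rw [← LinearMap.ker_eq_bot]
    rw [LinearMap.ker_eq_bot']
    intro c hc
    refine funext ((Fintype.linearIndependent_iff.mp hind) c ?_)
    funext i
    have := congrFun hc i
    simpa [Matrix.mulVecLin_apply, Matrix.mulVec, Matrix.vecMul, dotProduct, Finset.sum_apply,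
      Matrix.transpose_apply, mul_comm] using this
  -- rank argument
  have hrank : (M.map π).rank = Fintype.card κ := by
    rw [← Matrix.rank_transpose]
    rw [Matrix.rank]
    rw [LinearMap.finrank_range_of_inj hinj]
    simp [Module.finrank_pi]
  rw [← LinearMap.range_eq_top]
  apply Submodule.eq_top_of_finrank_eq
  rw [← Matrix.rank] at *
  rw [hrank, Module.finrank_pi]

open Matrix in
lemma surj_of_rows_linearIndependent {A : Type*} [CommRing A] [Fintype A]
    {ι κ : Type*} [Fintype ι] [Fintype κ] [DecidableEq κ] [DecidableEq ι]
    (M : Matrix κ ι A) (hv : LinearIndependent A (fun j => M j)) :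
    Function.Surjective M.mulVecLin := by
  classical
  set N := LinearMap.range M.mulVecLin with hNdef
  -- membership of "all coordinates in m" vectors in m • ⊤
  have hsingle : ∀ (m : Ideal A) (w : κ → A), (∀ j, w j ∈ m) →
      w ∈ m • (⊤ : Submodule A (κ → A)) := by
    intro m w hw
    have : w = ∑ j, w j • (Pi.single j 1 : κ → A) := by
      funext j'
      simp [Pi.single_apply, Finset.sum_ite_eq', mul_ite]
    rw [this]
    exact Submodule.sum_mem _ fun j _ =>
      Submodule.smul_mem_smul (hw j) Submodule.mem_top
  -- for each maximal ideal, range + m • ⊤ = ⊤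
  have hsup : ∀ m : Ideal A, m.IsMaximal →
      (⊤ : Submodule A (κ → A)) ≤ N ⊔ m • ⊤ := by
    intro m hm u _
    set π := Ideal.Quotient.mk m
    obtain ⟨zb, hzb⟩ := step_A M hv m hm (fun j => π (u j))
    choose z hz using fun i => Ideal.Quotient.mk_surjective (zb i)
    have hcongr : ∀ j, π ((M.mulVec z) j) = π (u j) := by
      intro j
      have := congrFun hzb j
      simp only [Matrix.mulVecLin_apply] at this
      rw [← this]
      simp [π, Matrix.mulVec, dotProduct, Matrix.map_apply, hz]
    have hmem : ∀ j, (u - M.mulVec z) j ∈ m := by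
      intro j
      have := hcongr j
      rw [← sub_eq_zero, ← map_sub, Ideal.Quotient.eq_zero_iff_mem] at this
      simpa using m.neg_mem this
    have : u = M.mulVec z + (u - M.mulVec z) := by ring
    rw [this]
    exact Submodule.add_mem_sup (LinearMap.mem_range_self M.mulVecLin z)
      (hsingle m _ hmem)
  -- Nakayama on the quotient
  haveI : Finite (Ideal A) :=
    Finite.of_injective (fun I : Ideal A => (I : Set A)) SetLike.coe_injective
  set Q := (κ → A) ⧸ N
  have hQtop : ∀ m : Ideal A, m.IsMaximal →
      (⊤ : Submodule A Q) ≤ m • ⊤ := by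
    intro m hm
    have h1 : (⊤ : Submodule A Q) = Submodule.map N.mkQ ⊤ := by
      rw [Submodule.map_top, LinearMap.range_eq_top.mpr (Submodule.mkQ_surjective N)]
    have hmapN : Submodule.map N.mkQ N = ⊥ := by
      rw [eq_bot_iff]
      rintro q ⟨u, hu, rfl⟩
      simpa using (Submodule.Quotient.mk_eq_zero N).mpr hu
    have h3 : (⊤ : Submodule A (κ → A)) = N ⊔ m • ⊤ := le_antisymm (hsup m hm) le_top
    refine le_of_eq ?_
    calc (⊤ : Submodule A Q) = Submodule.map N.mkQ ⊤ := h1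
      _ = Submodule.map N.mkQ (N ⊔ m • ⊤) := by rw [← h3]
      _ = m • ⊤ := by
          rw [Submodule.map_sup, hmapN, Submodule.map_smul'', bot_sup_eq,
            Submodule.map_top, LinearMap.range_eq_top.mpr (Submodule.mkQ_surjective N)]
  have hSfin : ({m : Ideal A | m.IsMaximal}).Finite := Set.toFinite _
  set S := hSfin.toFinset with hSdef
  set J := ∏ m ∈ S, m with hJdef
  have hJQ : (⊤ : Submodule A Q) ≤ J • ⊤ := by
    have key : ∀ s : Finset (Ideal A), (∀ m ∈ s, m.IsMaximal) →
        (⊤ : Submodule A Q) ≤ (∏ m ∈ s, m) • ⊤ := by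
      intro s
      induction s using Finset.induction_on with
      | empty => simp [Ideal.one_eq_top]
      | insert _ _ hnotmem ih =>
        rename_i m s'
        intro hall
        rw [Finset.prod_insert hnotmem, ← Ideal.smul_eq_mul, Submodule.smul_assoc]
        refine le_trans (hQtop m (hall m (Finset.mem_insert_self m s'))) ?_
        exact smul_mono_right m (ih fun m' hm' => hall m' (Finset.mem_insert_of_mem hm'))
    exact key S (fun m hm => hSfin.mem_toFinset.mp hm)
  have hJjac : J ≤ Ideal.jacobson ⊥ := by
    rw [Ideal.jacobson]
    refine le_sInf ?_
    rintro m' ⟨-, hm'⟩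
    refine le_trans Ideal.prod_le_inf (Finset.inf_le ?_)
    exact hSfin.mem_toFinset.mpr hm'
  have hfg : (⊤ : Submodule A Q).FG := Module.Finite.fg_top
  have hbot : (⊤ : Submodule A Q) = ⊥ :=
    Submodule.eq_bot_of_le_smul_of_le_jacobson_bot J ⊤ hfg hJQ hJjac
  rw [← LinearMap.range_eq_top, ← hNdef]
  rw [Submodule.eq_top_iff']
  intro u
  have : N.mkQ u ∈ (⊤ : Submodule A Q) := Submodule.mem_top
  rw [hbot] at this
  exact (Submodule.Quotient.mk_eq_zero N).mp this

/-- Let `C` be a free submodule of `A^n` over a finite commutative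
ring `A` and `x ∈ A^n`.  Then `x ∈ C` iff its syndrome vanishes, i.e. iff
`⟨x,y⟩ = 0` for every `y ∈ C^⊥`. -/
theorem mem_code_iff_syndrome_eq_zero
    {A : Type*} [CommRing A] [Fintype A] {n : ℕ}
    (C : Submodule A (Fin n → A)) (hC : Module.Free A C) (x : Fin n → A) :
    x ∈ C ↔ ∀ y ∈ dualCode C, ∑ i, x i * y i = 0 := by
  classical
  constructor
  · intro hx y hy
    exact hy x hx
  · intro hx
    haveI := hC
    haveI : Module.Finite A C := Module.Finite.of_finite
    set κ := Module.Free.ChooseBasisIndex A C with hκ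
    let b : Module.Basis κ A C := Module.Free.chooseBasis A C
    let v : κ → (Fin n → A) := fun j => (b j : Fin n → A)
    have hvC : ∀ j, v j ∈ C := fun j => (b j).2
    have hv : LinearIndependent A v :=
      b.linearIndependent.map' C.subtype (Submodule.ker_subtype C)
    let M : Matrix κ (Fin n) A := Matrix.of v
    have hv' : LinearIndependent A (fun j => M j) := hv
    have hsurj := surj_of_rows_linearIndependent M hv'
    obtain ⟨s, hs⟩ := Module.projective_lifting_property M.mulVecLin LinearMap.id hsurj
    have hsw : ∀ w : κ → A, M.mulVecLin (s w) = w := by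
      intro w
      rw [← LinearMap.comp_apply, hs, LinearMap.id_apply]
    -- kernel of M.mulVecLin is contained in the dual code
    have hker : ∀ z : Fin n → A, M.mulVecLin z = 0 → z ∈ dualCode C := by
      intro z hz c hc
      have hrepr : (⟨c, hc⟩ : C) = ∑ j, (b.repr ⟨c, hc⟩) j • b j := (b.sum_repr _).symm
      have hc' : c = ∑ j, (b.repr ⟨c, hc⟩) j • v j := by
        have := congrArg (Submodule.subtype C) hrepr
        simp only [map_sum, map_smul, Submodule.subtype_apply] at this
        exact this
      rw [hc']
      have hMz : ∀ j, ∑ i, v j i * z i = 0 := by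
        intro j
        have := congrFun hz j
        simpa [M, Matrix.mulVecLin_apply, Matrix.mulVec, dotProduct] using this
      calc ∑ i, (∑ j, (b.repr ⟨c, hc⟩) j • v j) i * z i
          = ∑ i, ∑ j, (b.repr ⟨c, hc⟩) j * (v j i * z i) := by
            refine Finset.sum_congr rfl fun i _ => ?_
            rw [Finset.sum_apply, Finset.sum_mul]
            exact Finset.sum_congr rfl fun j _ => by
              simp [mul_assoc]
        _ = ∑ j, (b.repr ⟨c, hc⟩) j * ∑ i, v j i * z i := by
            rw [Finset.sum_comm]
            exact Finset.sum_congr rfl fun j _ => by rw [Finset.mul_sum]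
        _ = 0 := by simp [hMz]
    -- pi decomposition lemma
    have hpi : ∀ (g : κ → A), g = ∑ j, g j • (Pi.single j 1 : κ → A) := by
      intro g
      funext j'
      simp [Pi.single_apply, Finset.sum_ite_eq', mul_ite]
    -- the coefficients
    set c : κ → A := fun j => ∑ i, x i * (s (Pi.single j 1)) i with hcdef
    have hxw : x = ∑ j, c j • v j := by
      funext i₀
      set δ : Fin n → A := Pi.single i₀ 1 with hδ
      have hkerz : (δ - s (M.mulVecLin δ)) ∈ dualCode C := by
        apply hker
        rw [map_sub, hsw, sub_self]
      have h0 := hx _ hkerz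
      have h1 : ∑ i, x i * δ i = ∑ i, x i * (s (M.mulVecLin δ)) i := by
        have : ∑ i, x i * (δ i - (s (M.mulVecLin δ)) i) = 0 := by
          simpa [Pi.sub_apply] using h0
        rw [← sub_eq_zero]
        rw [← Finset.sum_sub_distrib]
        simpa [mul_sub] using this
      have h2 : ∑ i, x i * δ i = x i₀ := by
        simp [hδ, Pi.single_apply, mul_ite, Finset.sum_ite_eq']
      have h3 : M.mulVecLin δ = fun j => v j i₀ := by
        funext j
        simp [M, hδ, Matrix.mulVecLin_apply, Matrix.mulVec, dotProduct,
          Pi.single_apply, mul_ite, Finset.sum_ite_eq']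
      have h4 : s (M.mulVecLin δ) = ∑ j, v j i₀ • s (Pi.single j 1) := by
        conv_lhs => rw [hpi (M.mulVecLin δ)]
        rw [map_sum]
        refine Finset.sum_congr rfl fun j _ => ?_
        rw [map_smul, h3]
      have h5 : ∑ i, x i * (s (M.mulVecLin δ)) i = ∑ j, c j * v j i₀ := by
        rw [h4]
        calc ∑ i, x i * (∑ j, v j i₀ • s (Pi.single j 1)) i
            = ∑ i, ∑ j, v j i₀ * (x i * (s (Pi.single j 1)) i) := by
              refine Finset.sum_congr rfl fun i _ => ?_
              rw [Finset.sum_apply, Finset.mul_sum]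
              exact Finset.sum_congr rfl fun j _ => by
                simp [smul_eq_mul]; ring
          _ = ∑ j, v j i₀ * ∑ i, x i * (s (Pi.single j 1)) i := by
              rw [Finset.sum_comm]
              exact Finset.sum_congr rfl fun j _ => by rw [Finset.mul_sum]
          _ = ∑ j, c j * v j i₀ := by
              exact Finset.sum_congr rfl fun j _ => by rw [hcdef]; ring
      rw [← h2, h1, h5]
      simp [Finset.sum_apply, smul_eq_mul]
    rw [hxw]
    exact Submodule.sum_mem C fun j _ => Submodule.smul_mem C _ (hvC j)
end

section
/- Let A be a finite commutative ring, let C be a free submodule of A^n, and let x, y ∈ A^n. Then x and y have the same coset modulo C (i.e., x − y ∈ C) if and only if S(x) = S(y), i.e., if and only if ⟨x,z⟩ = ⟨y,z⟩ for every z ∈ C^⊥. -/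
open Matrix

theorem vecMul_injective_iff' {R : Type*} [CommRing R] {k n : ℕ}
    {M : Matrix (Fin k) (Fin n) R} :
    Function.Injective M.vecMul ↔ ∀ c, c ᵥ* M = 0 → c = 0 := by
  rw [Matrix.vecMul_injective_iff, Fintype.linearIndependent_iff]
  have key : ∀ c : Fin k → R, (∑ i, c i • M.row i) = c ᵥ* M := by
    intro c; funext j
    simp [Matrix.vecMul, dotProduct, Finset.sum_apply, Matrix.row]
  constructor
  · intro h c hc
    funext i; exact h c (by rw [key]; exact hc) i
  · intro h c hc i
    rw [key] at hc
    exact congrFun (h c hc) i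

theorem exists_pow_isIdempotent {A : Type*} [Monoid A] [Finite A] (a : A) :
    ∃ m : ℕ, 1 ≤ m ∧ IsIdempotentElem (a ^ m) := by
  obtain ⟨i, j, hne, heq⟩ := Finite.exists_ne_map_eq_of_infinite fun n : ℕ => a ^ n
  wlog hij : i < j generalizing i j
  · exact this j i hne.symm heq.symm (by omega)
  set d := j - i with hd
  have hd1 : 1 ≤ d := by omega
  have step : ∀ N, i ≤ N → a ^ (N + d) = a ^ N := by
    intro N hN
    have h1 : N + d = (N - i) + j := by omega
    have h2 : N = (N - i) + i := by omega
    rw [h1, pow_add, ← heq, ← pow_add, ← h2]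
  have iter : ∀ m N, i ≤ N → a ^ (N + m * d) = a ^ N := by
    intro m
    induction m with
    | zero => simp
    | succ m ih =>
      intro N hN
      have h1 : N + (m + 1) * d = (N + d) + m * d := by ring
      rw [h1, ih (N + d) (by omega), step N hN]
  refine ⟨(i + 1) * d, by nlinarith, ?_⟩
  have hle : i ≤ (i + 1) * d := by nlinarith
  show a ^ ((i + 1) * d) * a ^ ((i + 1) * d) = a ^ ((i + 1) * d)
  rw [← pow_add]
  exact iter (i + 1) ((i + 1) * d) hle

theorem isUnit_or_isNilpotent_of_trivialIdem {A : Type*} [CommRing A] [Finite A]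
    (h : ∀ e : A, IsIdempotentElem e → e = 0 ∨ e = 1) (a : A) :
    IsUnit a ∨ IsNilpotent a := by
  obtain ⟨m, hm1, hm⟩ := exists_pow_isIdempotent a
  rcases h _ hm with h0 | h1
  · exact Or.inr ⟨m, h0⟩
  · left
    refine IsUnit.of_mul_eq_one (a ^ (m - 1)) ?_
    have : a * a ^ (m - 1) = a ^ (m - 1 + 1) := (pow_succ' a (m - 1)).symm
    rw [this, show m - 1 + 1 = m by omega, h1]

theorem pow_entry_mem {A : Type*} [CommRing A] {k : ℕ} (E : Matrix (Fin k) (Fin k) A)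
    (I : Ideal A) (hE : ∀ i j, E i j ∈ I) :
    ∀ s i j, (E ^ s) i j ∈ I ^ s := by
  intro s
  induction s with
  | zero => intro i j; simp [Ideal.one_eq_top]
  | succ s ih =>
    intro i j
    rw [show E ^ (s + 1) = E ^ s * E from pow_succ E s,
      show I ^ (s + 1) = I ^ s * I from pow_succ I s, Matrix.mul_apply]
    refine Submodule.sum_mem _ fun l _ => ?_
    exact Ideal.mul_mem_mul (ih i l) (hE l j)

theorem exists_rightInverse_field {K : Type*} [Field K] {k n : ℕ}
    (M : Matrix (Fin k) (Fin n) K) (h : LinearIndependent K (fun i => M i)) :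
    ∃ N : Matrix (Fin n) (Fin k) K, M * N = 1 := by
  classical
  have hrank : M.rank = k := by
    rw [← Matrix.rank_transpose, Matrix.rank_eq_finrank_span_cols, Matrix.col_transpose]
    rw [finrank_span_eq_card (b := M.row) h, Fintype.card_fin]
  have hrange : LinearMap.range M.mulVecLin = ⊤ := by
    apply Submodule.eq_top_of_finrank_eq
    rw [show Module.finrank K ↥(LinearMap.range M.mulVecLin) = M.rank from rfl, hrank,
      Module.finrank_fintype_fun_eq_card, Fintype.card_fin]
  have hsurj : Function.Surjective M.mulVec := by
    intro b
    obtain ⟨u, hu⟩ := (LinearMap.range_eq_top.mp hrange) b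
    exact ⟨u, hu⟩
  choose u hu using hsurj
  refine ⟨Matrix.of fun j i => u (Pi.single i 1) j, ?_⟩
  ext a b
  have h2 := congrFun (hu (Pi.single b 1)) a
  simp only [Matrix.mulVec, dotProduct] at h2
  simp only [Matrix.mul_apply, Matrix.of_apply, h2, Matrix.one_apply, Pi.single_apply]

theorem exists_rightInverse_local {A : Type*} [CommRing A] [Finite A] [Nontrivial A]
    [IsLocalRing A] {k n : ℕ} (M : Matrix (Fin k) (Fin n) A)
    (hinj : Function.Injective M.vecMul) :
    ∃ N : Matrix (Fin n) (Fin k) A, M * N = 1 := by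
  classical
  set m := IsLocalRing.maximalIdeal A with hm
  have hnil : IsNilpotent m := by
    have h1 := IsArtinianRing.isNilpotent_jacobson_bot (R := A)
    rwa [IsLocalRing.jacobson_eq_maximalIdeal ⊥ bot_ne_top] at h1
  obtain ⟨s, hs0, hskill⟩ : ∃ s : A, s ≠ 0 ∧ ∀ x ∈ m, s * x = 0 := by
    have hex : ∃ t, m ^ t = ⊥ := by
      obtain ⟨t, ht⟩ := hnil; exact ⟨t, by simpa using ht⟩
    set T := Nat.find hex with hT
    have hTbot : m ^ T = ⊥ := Nat.find_spec hex
    have hT0 : T ≠ 0 := by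
      intro h0
      rw [h0, pow_zero, Ideal.one_eq_top] at hTbot
      have h1 : (1 : A) ∈ (⊥ : Ideal A) := hTbot ▸ Submodule.mem_top
      exact one_ne_zero ((Submodule.mem_bot A).mp h1)
    have hlt : m ^ (T - 1) ≠ ⊥ := Nat.find_min hex (by omega)
    obtain ⟨s, hsm, hs0⟩ := Submodule.exists_mem_ne_zero_of_ne_bot hlt
    refine ⟨s, hs0, fun x hx => ?_⟩
    have h2 : s * x ∈ m ^ (T - 1) * m := Ideal.mul_mem_mul hsm hx
    rw [← pow_succ, show T - 1 + 1 = T by omega, hTbot] at h2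
    simpa using h2
  set φ := IsLocalRing.residue A with hφ
  set Mb : Matrix (Fin k) (Fin n) (IsLocalRing.ResidueField A) := M.map φ with hMb
  have hindep : LinearIndependent (IsLocalRing.ResidueField A) (fun i => Mb i) := by
    rw [show (fun i => Mb i) = Mb.row from rfl, ← Matrix.vecMul_injective_iff, vecMul_injective_iff']
    intro cb hcb
    obtain ⟨c, hc⟩ : ∃ c : Fin k → A, ∀ i, φ (c i) = cb i := by
      choose c hc using fun i => IsLocalRing.residue_surjective (cb i)
      exact ⟨c, hc⟩
    have hmem : ∀ j, (c ᵥ* M) j ∈ m := by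
      intro j
      have h3 : φ ((c ᵥ* M) j) = (cb ᵥ* Mb) j := by
        simp [Matrix.vecMul, dotProduct, map_sum, hc, hMb, Matrix.map_apply]
      rw [hcb] at h3
      have h3' : φ ((c ᵥ* M) j) = 0 := by simpa using h3
      rw [hφ, IsLocalRing.residue_eq_zero_iff] at h3'
      exact h3'
    have hzero : (s • c) ᵥ* M = 0 := by
      funext j
      have h4 : ((s • c) ᵥ* M) j = s * ((c ᵥ* M) j) := by
        simp [Matrix.vecMul, dotProduct, Finset.mul_sum, mul_assoc]
      rw [h4, hskill _ (hmem j)]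
      rfl
    have hsc : s • c = 0 := hinj (show (s • c) ᵥ* M = (0 : Fin k → A) ᵥ* M by
      rw [hzero, Matrix.zero_vecMul])
    funext i
    have hci : c i ∈ m := by
      by_contra hci
      have hu : IsUnit (c i) := by
        by_contra hnu
        exact hci (IsLocalRing.mem_maximalIdeal (c i) |>.mpr hnu)
      obtain ⟨u, hu⟩ := hu
      have h5 : s * c i = 0 := by
        have := congrFun hsc i
        simpa using this
      apply hs0
      calc s = s * c i * ↑u⁻¹ := by rw [← hu, mul_assoc, Units.mul_inv, mul_one]
      _ = 0 := by rw [h5, zero_mul]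
    rw [← hc i]
    show φ (c i) = (0 : Fin k → IsLocalRing.ResidueField A) i
    show φ (c i) = 0
    rw [hφ, IsLocalRing.residue_eq_zero_iff]
    exact hci
  obtain ⟨Nb, hNb⟩ := exists_rightInverse_field Mb hindep
  obtain ⟨N₀, hN₀⟩ : ∃ N₀ : Matrix (Fin n) (Fin k) A, N₀.map φ = Nb := by
    choose f hf using fun (j : Fin n) (i : Fin k) => IsLocalRing.residue_surjective (Nb j i)
    exact ⟨Matrix.of f, by ext j i; exact hf j i⟩
  set E := 1 - M * N₀ with hE
  have hEmem : ∀ i j, E i j ∈ m := by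
    intro i j
    have h2 : φ ((M * N₀) i j) = (Mb * Nb) i j := by
      simp [Matrix.mul_apply, map_sum, hMb, ← hN₀, Matrix.map_apply]
    rw [hm, ← IsLocalRing.residue_eq_zero_iff]
    show φ (E i j) = 0
    rw [hE]
    simp only [Matrix.sub_apply]
    rw [map_sub, h2, hNb]
    simp [Matrix.one_apply, apply_ite φ]
  obtain ⟨T, hTT⟩ := hnil
  have hET : E ^ T = 0 := by
    ext i j
    have h6 := pow_entry_mem E m hEmem T i j
    rw [hTT] at h6
    simpa using h6
  refine ⟨N₀ * ∑ i ∈ Finset.range T, E ^ i, ?_⟩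
  have hME : M * N₀ = 1 - E := by rw [hE, sub_sub_cancel]
  rw [← Matrix.mul_assoc, hME, show (1 : Matrix (Fin k) (Fin k) A) - E = -(E - 1) from (neg_sub E 1).symm,
    neg_mul, mul_geom_sum, hET]
  simp

universe u

theorem exists_rightInverse_aux (B : ℕ) :
    ∀ (A : Type u) [CommRing A] [Finite A] {k n : ℕ}
      (M : Matrix (Fin k) (Fin n) A), Nat.card A ≤ B →
      Function.Injective M.vecMul → ∃ N : Matrix (Fin n) (Fin k) A, M * N = 1 := by
  induction B with
  | zero =>
    intro A _ _ k n M hB _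
    have := Nat.card_pos (α := A)
    omega
  | succ B ih =>
    intro A _ _ k n M hB hinj
    by_cases hss : Subsingleton A
    · exact ⟨0, Subsingleton.elim _ _⟩
    haveI : Nontrivial A := not_subsingleton_iff_nontrivial.mp hss
    by_cases hidem : ∃ e : A, IsIdempotentElem e ∧ e ≠ 0 ∧ e ≠ 1
    · obtain ⟨e, he, he0, he1⟩ := hidem
      have key : ∀ f : A, IsIdempotentElem f → f ≠ 0 → f ≠ 1 →
          ∃ N₁ : Matrix (Fin n) (Fin k) A,
            ((1 - f) • (M * N₁) : Matrix (Fin k) (Fin k) A) = (1 - f) • 1 := by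
        intro f hf hf0 hf1
        classical
        set I := Ideal.span {f} with hI
        set ψ := Ideal.Quotient.mk I with hψ
        have hψf : ψ f = 0 :=
          Ideal.Quotient.eq_zero_iff_mem.mpr (Ideal.subset_span (by simp))
        haveI : Finite (A ⧸ I) := Quotient.finite _
        have hcard : Nat.card (A ⧸ I) ≤ B := by
          have hlt : Nat.card (A ⧸ I) < Nat.card A := by
            have hninj : ¬ Function.Injective ψ := by
              intro hin
              exact hf0 (hin (by rw [hψf, map_zero]))
            letI := Fintype.ofFinite A
            letI := Fintype.ofFinite (A ⧸ I)
            rw [Nat.card_eq_fintype_card, Nat.card_eq_fintype_card]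
            exact Fintype.card_lt_of_surjective_not_injective _
              Ideal.Quotient.mk_surjective hninj
          omega
        have hinjq : Function.Injective (M.map ψ).vecMul := by
          rw [vecMul_injective_iff']
          intro cb hcb
          obtain ⟨c, hc⟩ : ∃ c : Fin k → A, ∀ i, ψ (c i) = cb i := by
            choose c hc using fun i => Ideal.Quotient.mk_surjective (cb i)
            exact ⟨c, hc⟩
          have hmem : ∀ j, ∃ y, (c ᵥ* M) j = y * f := by
            intro j
            have h0 : ψ ((c ᵥ* M) j) = 0 := by
              have h3 : ψ ((c ᵥ* M) j) = (cb ᵥ* M.map ψ) j := by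
                simp [Matrix.vecMul, dotProduct, map_sum, hc, Matrix.map_apply]
              rw [h3, hcb]
              rfl
            obtain ⟨y, hy⟩ := Ideal.mem_span_singleton'.mp
              (hI ▸ Ideal.Quotient.eq_zero_iff_mem.mp h0)
            exact ⟨y, hy.symm⟩
          have hz : ((1 - f) • c) ᵥ* M = 0 := by
            funext j
            obtain ⟨y, hy⟩ := hmem j
            have h4 : (((1 - f) • c) ᵥ* M) j = (1 - f) * ((c ᵥ* M) j) := by
              simp [Matrix.vecMul, dotProduct, Finset.mul_sum, mul_assoc]
            rw [h4, hy]
            show (1 - f) * (y * f) = (0 : Fin n → A) j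
            have hff : f * f = f := hf
            show (1 - f) * (y * f) = 0
            linear_combination (-y) * hff
          have hc0 : (1 - f) • c = 0 :=
            hinj (show ((1 - f) • c) ᵥ* M = (0 : Fin k → A) ᵥ* M by
              rw [hz, Matrix.zero_vecMul])
          funext i
          have h5 : c i = f * c i := by
            have h6 := congrFun hc0 i
            simp only [Pi.smul_apply, smul_eq_mul, Pi.zero_apply] at h6
            linear_combination h6
          rw [← hc i]
          show ψ (c i) = 0
          rw [h5, _root_.map_mul, hψf, zero_mul]
        obtain ⟨N₁, hN₁⟩ := ih (A ⧸ I) (M.map ψ) hcard hinjq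
        obtain ⟨N₁', hN₁'⟩ : ∃ N' : Matrix (Fin n) (Fin k) A, N'.map ψ = N₁ := by
          choose g hg using fun (j : Fin n) (i : Fin k) =>
            Ideal.Quotient.mk_surjective (N₁ j i)
          exact ⟨Matrix.of g, by ext j i; exact hg j i⟩
        refine ⟨N₁', ?_⟩
        ext i j
        have hmm : ∃ y, (M * N₁') i j - (1 : Matrix (Fin k) (Fin k) A) i j = y * f := by
          have h7 : ψ ((M * N₁') i j - (1 : Matrix (Fin k) (Fin k) A) i j) = 0 := by
            rw [map_sub]
            have h8 : ψ ((M * N₁') i j) = (M.map ψ * N₁) i j := by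
              simp [Matrix.mul_apply, map_sum, ← hN₁', Matrix.map_apply]
            rw [h8, hN₁]
            simp [Matrix.one_apply, apply_ite ψ]
          exact (Ideal.mem_span_singleton'.mp
            (hI ▸ Ideal.Quotient.eq_zero_iff_mem.mp h7)).imp fun y hy => hy.symm
        obtain ⟨y, hy⟩ := hmm
        have hff : f * f = f := hf
        simp only [Matrix.smul_apply, smul_eq_mul]
        linear_combination (1 - f) * hy + (-y) * hff
      obtain ⟨N₁, h₁⟩ := key e he he0 he1
      obtain ⟨N₂, h₂⟩ := key (1 - e) he.one_sub
        (fun h => he1 (by linear_combination -h)) (fun h => he0 (by linear_combination -h))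
      refine ⟨(1 - e) • N₁ + e • N₂, ?_⟩
      have h₂' : e • (M * N₂) = e • (1 : Matrix (Fin k) (Fin k) A) := by
        rw [show e = 1 - (1 - e) by ring]
        exact h₂
      rw [Matrix.mul_add, Matrix.mul_smul, Matrix.mul_smul, h₁, h₂', ← add_smul]
      rw [show (1 : A) - e + e = 1 by ring, one_smul]
    · have hdi : ∀ e : A, IsIdempotentElem e → e = 0 ∨ e = 1 := by
        intro f hfi
        by_cases h0 : f = 0
        · exact Or.inl h0
        · by_cases h1 : f = 1
          · exact Or.inr h1
          · exact absurd ⟨f, hfi, h0, h1⟩ hidem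
      haveI : IsLocalRing A := IsLocalRing.of_isUnit_or_isUnit_one_sub_self fun a => by
        rcases isUnit_or_isNilpotent_of_trivialIdem hdi a with h | h
        · exact Or.inl h
        · exact Or.inr h.isUnit_one_sub
      exact exists_rightInverse_local M hinj

theorem exists_rightInverse {A : Type u} [CommRing A] [Finite A] {k n : ℕ}
    (M : Matrix (Fin k) (Fin n) A) (hinj : Function.Injective M.vecMul) :
    ∃ N : Matrix (Fin n) (Fin k) A, M * N = 1 :=
  exists_rightInverse_aux (Nat.card A) A M le_rfl hinj

/-- Let `C` be a free submodule of `A^n` over a finite commutative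
ring `A` and `x, y ∈ A^n`.  Then `x` and `y` lie in the same coset modulo `C`
iff they have the same syndrome, i.e. iff `⟨x,z⟩ = ⟨y,z⟩` for every `z ∈ C^⊥`. -/
theorem sub_mem_code_iff_syndrome_eq
    {A : Type*} [CommRing A] [Fintype A] {n : ℕ}
    (C : Submodule A (Fin n → A)) (hC : Module.Free A C) (x y : Fin n → A) :
    x - y ∈ C ↔ ∀ z ∈ dualCode C, ∑ i, x i * z i = ∑ i, y i * z i := by
  classical
  constructor
  · intro h z hz
    have h0 : ∑ i, (x - y) i * z i = 0 := hz (x - y) h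
    have h1 : ∑ i, (x i * z i - y i * z i) = 0 := by
      simpa [sub_mul] using h0
    rw [Finset.sum_sub_distrib] at h1
    exact sub_eq_zero.mp h1
  · intro h
    haveI := hC
    haveI : Module.Finite A C := Module.Finite.of_finite
    set κ := Module.Free.ChooseBasisIndex A C with hκ
    set k := Fintype.card κ with hk
    set b : Module.Basis (Fin k) A C := (Module.Free.chooseBasis A C).reindex (Fintype.equivFin κ)
      with hb
    set M : Matrix (Fin k) (Fin n) A := Matrix.of (fun i => ((b i : C) : Fin n → A)) with hM
    have hli : LinearIndependent A fun i => M i := by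
      show LinearIndependent A fun i => C.subtype (b i)
      exact b.linearIndependent.map' C.subtype C.ker_subtype
    have hinj : Function.Injective M.vecMul := Matrix.vecMul_injective_iff.mpr hli
    have hrange : LinearMap.range M.vecMulLinear = C := by
      rw [range_vecMulLinear]
      have h2 : Set.range M.row = C.subtype '' Set.range b := by
        rw [← Set.range_comp]; rfl
      rw [h2, Submodule.span_image, b.span_eq, Submodule.map_top, Submodule.range_subtype]
    have hmem : ∀ v : Fin n → A, v ∈ C ↔ ∃ c, c ᵥ* M = v := by
      intro v
      rw [← hrange]
      constructor
      · rintro ⟨c, rfl⟩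
        exact ⟨c, (Matrix.vecMulLinear_apply M c).symm⟩
      · rintro ⟨c, rfl⟩
        exact ⟨c, Matrix.vecMulLinear_apply M c⟩
    obtain ⟨N, hN⟩ := exists_rightInverse M hinj
    have hworth : ∀ z ∈ dualCode C, ∑ i, (x - y) i * z i = 0 := by
      intro z hz
      have h3 := h z hz
      simp only [Pi.sub_apply, sub_mul, Finset.sum_sub_distrib]
      rw [h3, sub_self]
    set P : Matrix (Fin n) (Fin n) A := N * M with hP
    have hcol : ∀ j : Fin n, (fun i => (1 - P) i j) ∈ dualCode C := by
      intro j
      show ∀ v ∈ C, ∑ i, v i * (1 - P) i j = 0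
      intro v hv
      obtain ⟨c, rfl⟩ := (hmem v).mp hv
      have h4 : ∑ i, (c ᵥ* M) i * (1 - P) i j = ((c ᵥ* M) ᵥ* (1 - P)) j := rfl
      rw [h4, Matrix.vecMul_sub, Matrix.vecMul_one, Matrix.vecMul_vecMul, hP,
        ← Matrix.mul_assoc, hN, Matrix.one_mul]
      simp
    have hwP : (x - y) ᵥ* (1 - P) = 0 := by
      funext j
      exact hworth _ (hcol j)
    have h6 : (x - y) ᵥ* 1 - (x - y) ᵥ* P = 0 := by
      rw [← Matrix.vecMul_sub]; exact hwP
    have h7 : x - y = (x - y) ᵥ* P := by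
      have h8 := sub_eq_zero.mp h6
      rwa [Matrix.vecMul_one] at h8
    refine (hmem (x - y)).mpr ⟨(x - y) ᵥ* N, ?_⟩
    rw [Matrix.vecMul_vecMul, ← hP, ← h7]
end

section
/- Let A be a finite local commutative ring, let C be a free submodule of A^n of rank k with generator matrix G ∈ M_{k,n}(A) (the rows of G form a basis of C), and let H ∈ M_{n−k,n}(A). Then H is a control matrix of C (i.e., the rows of H form a basis of C^⊥) if and only if G·Hᵗ = 0 and the row vectors of H are linearly independent over A. -/
open IsLocalRing Matrix

section ControlMatrixAux

variable {A : Type*} [CommRing A] [IsLocalRing A]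

/-- Nilpotency trick: over a local ring with nilpotent maximal ideal, a linear
combination of linearly independent vectors with all coordinates in the maximal
ideal has all coefficients in the maximal ideal. -/
lemma coeffs_mem_maximalIdeal {r n : ℕ}
    (hnil : IsNilpotent (maximalIdeal A))
    {x : Fin r → (Fin n → A)} (hx : LinearIndependent A x)
    (lam : Fin r → A) (hv : ∀ i, (∑ j, lam j • x j) i ∈ maximalIdeal A) :
    ∀ j, lam j ∈ maximalIdeal A := by
  intro j0
  by_contra hj0
  have hu : IsUnit (lam j0) := by
    by_contra h
    exact hj0 ((mem_maximalIdeal _).mpr h)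
  obtain ⟨t0, ht0⟩ := hnil
  have hex : ∃ s, (maximalIdeal A) ^ s = ⊥ := ⟨t0, ht0⟩
  classical
  set t := Nat.find hex with htdef
  have ht : (maximalIdeal A) ^ t = ⊥ := Nat.find_spec hex
  have htpos : 0 < t := by
    rcases Nat.eq_zero_or_pos t with h0 | h
    · exfalso
      rw [h0, pow_zero, Ideal.one_eq_top] at ht
      exact one_ne_zero ((Submodule.mem_bot A).mp (ht ▸ Submodule.mem_top : (1:A) ∈ (⊥ : Ideal A)))
    · exact h
  have hne : (maximalIdeal A) ^ (t - 1) ≠ ⊥ := Nat.find_min hex (by omega)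
  obtain ⟨a, ha, ha0⟩ := Submodule.exists_mem_ne_zero_of_ne_bot hne
  have hzero : ∑ j, (a * lam j) • x j = 0 := by
    have h1 : ∑ j, (a * lam j) • x j = a • ∑ j, lam j • x j := by
      rw [Finset.smul_sum]
      simp [smul_smul]
    rw [h1]
    funext i
    have : a * (∑ j, lam j • x j) i ∈ (maximalIdeal A) ^ (t - 1) * maximalIdeal A :=
      Ideal.mul_mem_mul ha (hv i)
    rw [← pow_succ, Nat.sub_add_cancel htpos, ht] at this
    simpa using (Submodule.mem_bot A).mp this
  have := Fintype.linearIndependent_iff.mp hx _ hzero j0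
  exact ha0 ((hu.mul_left_eq_zero).mp this)

/-- Over a field, a matrix with linearly independent rows gives a surjective `mulVec`. -/
lemma mulVec_surjective_of_linearIndependent_field {F : Type*} [Field F] {k n : ℕ}
    (M : Matrix (Fin k) (Fin n) F) (h : LinearIndependent F (fun j => M j)) :
    Function.Surjective M.mulVec := by
  have hinj : Function.Injective M.vecMulLinear := by
    rw [Matrix.coe_vecMulLinear]
    exact Matrix.vecMul_injective_iff.mpr h
  have hrank : Mᵀ.rank = k := by
    rw [Matrix.rank, LinearMap.finrank_range_of_inj (by rw [Matrix.mulVecLin_transpose]; exact hinj),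
      Module.finrank_fin_fun]
  have hrk : M.rank = k := by rw [← Matrix.rank_transpose]; exact hrank
  have htop : LinearMap.range M.mulVecLin = ⊤ := by
    apply Submodule.eq_top_of_finrank_eq
    rw [← Matrix.rank] at *
    rw [hrk, Module.finrank_fin_fun]
  intro c
  obtain ⟨y, hy⟩ := LinearMap.range_eq_top.mp htop c
  exact ⟨y, by simpa using hy⟩

omit [IsLocalRing A] in
/-- A vector with all entries in an ideal `I` lies in `I • ⊤`. -/
lemma mem_ideal_smul_top {k : ℕ} (I : Ideal A) (v : Fin k → A) (hv : ∀ j, v j ∈ I) :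
    v ∈ I • (⊤ : Submodule A (Fin k → A)) := by
  classical
  have : v = ∑ j, v j • (Pi.single j 1 : Fin k → A) := by
    funext i
    simp [Finset.sum_apply, Pi.single_apply, mul_comm]
  rw [this]
  exact Submodule.sum_mem _ fun j _ =>
    Submodule.smul_mem_smul (hv j) Submodule.mem_top

/-- Over a finite local commutative ring, a matrix with linearly independent rows
gives a surjective `mulVec`. -/
lemma mulVec_surjective_of_linearIndependent {k n : ℕ} [Fintype A]
    (G : Matrix (Fin k) (Fin n) A)
    (hG : LinearIndependent A (fun j => G j)) : Function.Surjective G.mulVec := by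
  classical
  have hnil : IsNilpotent (maximalIdeal A) := by
    have := IsArtinianRing.isNilpotent_jacobson_bot (R := A)
    rwa [jacobson_eq_maximalIdeal ⊥ bot_ne_top] at this
  set φ := residue A
  set M := G.map φ with hM
  have hMind : LinearIndependent (ResidueField A) (fun j => M j) := by
    rw [Fintype.linearIndependent_iff]
    intro c hc j0
    obtain ⟨lam, hlam⟩ : ∃ lam : Fin k → A, ∀ j, φ (lam j) = c j := by
      choose lam hlam using fun j => Ideal.Quotient.mk_surjective (I := maximalIdeal A) (c j)
      exact ⟨lam, hlam⟩
    have hv : ∀ i, (∑ j, lam j • G j) i ∈ maximalIdeal A := by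
      intro i
      rw [← residue_eq_zero_iff]
      have : φ ((∑ j, lam j • G j) i) = (∑ j, c j • M j) i := by
        simp only [Finset.sum_apply, Pi.smul_apply, smul_eq_mul, map_sum]
        exact Finset.sum_congr rfl fun j _ => by
          rw [_root_.map_mul, hlam]; simp [hM, Matrix.map_apply]
      rw [this, hc]
      rfl
    have := coeffs_mem_maximalIdeal hnil hG lam hv j0
    rw [← hlam j0]
    exact residue_eq_zero_iff _ |>.mpr this
  have hMsurj := mulVec_surjective_of_linearIndependent_field M hMind
  have hFG : (⊤ : Submodule A (Fin k → A)).FG := Module.Finite.fg_top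
  have hle : (⊤ : Submodule A (Fin k → A)) ≤
      LinearMap.range G.mulVecLin ⊔ (maximalIdeal A) • (⊤ : Submodule A (Fin k → A)) := by
    intro c _
    obtain ⟨z, hz⟩ := hMsurj (fun j => φ (c j))
    obtain ⟨y, hy⟩ : ∃ y : Fin n → A, ∀ i, φ (y i) = z i := by
      choose y hy using fun i => Ideal.Quotient.mk_surjective (I := maximalIdeal A) (z i)
      exact ⟨y, hy⟩
    have hd : ∀ j, (c - G.mulVec y) j ∈ maximalIdeal A := by
      intro j
      rw [← residue_eq_zero_iff]
      have h1 : φ ((G.mulVec y) j) = (M.mulVec z) j := by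
        simp only [Matrix.mulVec, dotProduct, map_sum]
        exact Finset.sum_congr rfl fun i _ => by
          rw [_root_.map_mul, hy]; simp [hM, Matrix.map_apply]
      have : φ ((c - G.mulVec y) j) = φ (c j) - φ ((G.mulVec y) j) := by
        simp
      rw [this, h1, hz]
      simp
    have hc2 : c = G.mulVec y + (c - G.mulVec y) := by abel
    rw [hc2]
    exact Submodule.add_mem_sup ⟨y, by simp⟩ (mem_ideal_smul_top _ _ hd)
  have : (⊤ : Submodule A (Fin k → A)) ≤ LinearMap.range G.mulVecLin :=
    Submodule.le_of_le_smul_of_le_jacobson_bot hFG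
      (by rw [jacobson_eq_maximalIdeal ⊥ bot_ne_top]) hle
  intro c
  obtain ⟨y, hy⟩ := this (Submodule.mem_top : c ∈ ⊤)
  exact ⟨y, by simpa using hy⟩

end ControlMatrixAux

/-- Over a finite local commutative ring `A`, let `C` be an
`(n,k)`-code with generator matrix `G` (its rows form a basis of `C`) and let
`H ∈ M_{n-k,n}(A)`.  Then `H` is a control matrix of `C` (its rows form a basis of
`C^⊥`) iff `G·Hᵗ = 0` and the rows of `H` are linearly independent. -/
theorem control_matrix_iff
    {A : Type*} [CommRing A] [Fintype A] [IsLocalRing A] {n k : ℕ}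
    (C : Submodule A (Fin n → A)) (G : Matrix (Fin k) (Fin n) A)
    (bG : Module.Basis (Fin k) A C) (hG : ∀ i, (bG i : Fin n → A) = G i)
    (H : Matrix (Fin (n - k)) (Fin n) A) :
    (∃ bH : Module.Basis (Fin (n - k)) A (dualCode C), ∀ i, (bH i : Fin n → A) = H i) ↔
      G * H.transpose = 0 ∧ LinearIndependent A (fun i : Fin (n - k) => H i) := by
  classical
  constructor
  · rintro ⟨bH, hbH⟩
    constructor
    · ext j i
      simp only [Matrix.mul_apply, Matrix.transpose_apply, Matrix.zero_apply]
      have hmem : (bH i : Fin n → A) ∈ dualCode C := (bH i).2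
      have h := hmem (bG j : Fin n → A) (bG j).2
      rw [hG j, hbH i] at h
      exact h
    · have h2 := (bH.linearIndependent).map' (dualCode C).subtype
        (Submodule.ker_subtype _)
      have he : (fun i : Fin (n - k) => H i) = (dualCode C).subtype ∘ bH :=
        funext fun i => ((hbH i).symm : H i = _)
      rw [he]
      exact h2
  · rintro ⟨hGH, hHind⟩
    -- rows of `G` are linearly independent
    have hGind : LinearIndependent A (fun j : Fin k => G j) := by
      have h2 := (bG.linearIndependent).map' C.subtype (Submodule.ker_subtype _)
      have he : (fun j : Fin k => G j) = C.subtype ∘ bG :=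
        funext fun j => ((hG j).symm : G j = _)
      rw [he]
      exact h2
    set ψ := G.mulVecLin with hψdef
    -- the dual code is the kernel of `ψ`
    have hker : dualCode C = LinearMap.ker ψ := by
      ext y
      simp only [LinearMap.mem_ker, Matrix.mulVecLin_apply]
      constructor
      · intro hy
        funext j
        have hmem : G j ∈ C := by rw [← hG j]; exact (bG j).2
        have := hy (G j) hmem
        simpa [hψdef, Matrix.mulVec, dotProduct] using this
      · intro hy x hx
        have h0 : ∀ j, ∑ i, G j i * y i = 0 := fun j => by
          have := congrFun hy j
          simpa [hψdef, Matrix.mulVec, dotProduct] using this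
        have hrep : ((∑ j, bG.repr ⟨x, hx⟩ j • bG j : C) : Fin n → A) = x := by
          rw [bG.sum_repr ⟨x, hx⟩]
        have hx2 : x = ∑ j, bG.repr ⟨x, hx⟩ j • G j :=
          hrep.symm.trans (by
            simp only [AddSubmonoidClass.coe_finset_sum, SetLike.val_smul, hG])
        rw [hx2]
        calc ∑ i, (∑ j, bG.repr ⟨x, hx⟩ j • G j) i * y i
            = ∑ i, ∑ j, bG.repr ⟨x, hx⟩ j * (G j i * y i) := by
              simp [Finset.sum_apply, Finset.sum_mul, mul_assoc]
          _ = ∑ j, bG.repr ⟨x, hx⟩ j * ∑ i, G j i * y i := by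
              rw [Finset.sum_comm]
              simp [Finset.mul_sum]
          _ = 0 := by simp [h0]
    -- surjectivity of ψ and cardinalities
    have hψsurj : Function.Surjective G.mulVec :=
      mulVec_surjective_of_linearIndependent G hGind
    have hψ'surj : Function.Surjective ψ.toAddMonoidHom := fun c => by
      obtain ⟨y, hy⟩ := hψsurj c
      exact ⟨y, by simpa [hψdef] using hy⟩
    have e1 : ((Fin n → A) ⧸ (LinearMap.ker ψ).toAddSubgroup) ≃+ (Fin k → A) := by
      have hKeq : ψ.toAddMonoidHom.ker = (LinearMap.ker ψ).toAddSubgroup := by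
        ext y
        simp [AddMonoidHom.mem_ker, LinearMap.mem_ker]
      exact hKeq ▸ QuotientAddGroup.quotientKerEquivOfSurjective ψ.toAddMonoidHom hψ'surj
    have hcards := AddSubgroup.card_eq_card_quotient_mul_card_addSubgroup
      (LinearMap.ker ψ).toAddSubgroup
    rw [Nat.card_congr e1.toEquiv] at hcards
    have hcardfun : ∀ r : ℕ, Nat.card (Fin r → A) = (Nat.card A) ^ r := fun r => by
      rw [Nat.card_fun, Nat.card_eq_fintype_card (α := Fin r), Fintype.card_fin]
    have hKD : Nat.card (LinearMap.ker ψ).toAddSubgroup = Nat.card (dualCode C) := by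
      refine Nat.card_congr (Equiv.subtypeEquivRight fun y => ?_)
      rw [hker]
      rfl
    rw [hcardfun n, hcardfun k, hKD] at hcards
    -- the span of the rows of H
    set S := Submodule.span A (Set.range fun i : Fin (n - k) => H i) with hSdef
    have hHmemD : ∀ i, H i ∈ dualCode C := by
      intro i
      rw [hker]
      simp only [LinearMap.mem_ker, Matrix.mulVecLin_apply]
      funext j
      have := congrFun (congrFun hGH j) i
      simpa [hψdef, Matrix.mul_apply, Matrix.mulVec, dotProduct] using this
    have hSle : S ≤ dualCode C := Submodule.span_le.mpr (by
      rintro _ ⟨i, rfl⟩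
      exact hHmemD i)
    have hcardS : Nat.card S = (Nat.card A) ^ (n - k) := by
      rw [Nat.card_congr (Module.Basis.span hHind).equivFun.toEquiv, hcardfun (n - k)]
    -- conclude equal cardinalities
    have hA2 : 1 < Nat.card A := by rw [Nat.card_eq_fintype_card]; exact Fintype.one_lt_card
    have hDpos : 0 < Nat.card (dualCode C) := Nat.card_pos
    have hkn : k ≤ n := by
      have h1 : (Nat.card A) ^ k ≤ (Nat.card A) ^ n := by
        calc (Nat.card A) ^ k = (Nat.card A) ^ k * 1 := (mul_one _).symm
          _ ≤ (Nat.card A) ^ k * Nat.card (dualCode C) :=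
              Nat.mul_le_mul_left _ hDpos
          _ = (Nat.card A) ^ n := hcards.symm
      exact (Nat.pow_le_pow_iff_right hA2).mp h1
    have hcardD : Nat.card (dualCode C) = (Nat.card A) ^ (n - k) := by
      have h1 : (Nat.card A) ^ k * Nat.card (dualCode C)
          = (Nat.card A) ^ k * (Nat.card A) ^ (n - k) := by
        rw [← hcards, ← pow_add, Nat.add_sub_cancel' hkn]
      exact Nat.eq_of_mul_eq_mul_left (Nat.pow_pos (by omega) : 0 < (Nat.card A) ^ k) h1
    -- S = dualCode C
    have hSeq : S = dualCode C := by
      apply SetLike.coe_injective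
      refine Set.eq_of_subset_of_ncard_le ?_ ?_ (Set.toFinite _)
      · exact hSle
      · rw [← Nat.card_coe_set_eq, ← Nat.card_coe_set_eq]
        have e2 : Nat.card (dualCode C : Set (Fin n → A)) = Nat.card (dualCode C) :=
          Nat.card_congr (Equiv.subtypeEquivRight fun y => Iff.rfl)
        have e3 : Nat.card (S : Set (Fin n → A)) = Nat.card S :=
          Nat.card_congr (Equiv.subtypeEquivRight fun y => Iff.rfl)
        rw [e2, e3, hcardS, hcardD]
    refine ⟨(Module.Basis.span hHind).map (LinearEquiv.ofEq _ _ hSeq), fun i => ?_⟩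
    rw [Module.Basis.map_apply]
    show ((LinearEquiv.ofEq _ _ hSeq) (Module.Basis.span hHind i) : Fin n → A) = H i
    rw [show ((LinearEquiv.ofEq _ _ hSeq) (Module.Basis.span hHind i) : Fin n → A)
        = (Module.Basis.span hHind i : Fin n → A) from rfl]
    exact congrArg Subtype.val (Module.Basis.span_apply hHind i)
end
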